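/- Let n ≥ 1 and η > 0. Let S : ℝ × [−η,η] → M(2n,ℝ), (λ,t) ↦ S_λ(t), be a C¹ family of symmetric matrices, and let Ψ : ℝ × [−η,η] → M(2n,ℝ), (λ,t) ↦ Ψ_λ(t), be a C¹ family of matrices satisfying J·Ψ_λ′(t) + S_λ(t)·Ψ_λ(t) = 0 for all (λ,t) (where ′ is the derivative in t) and Ψ_λ(−η) = I for all λ. Then for every λ the matrix identity ∫_{−η}^{η} Ψ_λ(t)ᵀ·(∂_λS)_λ(t)·Ψ_λ(t) dt = − Ψ_λ(η)ᵀ·J·(∂_λΨ)_λ(η) holds, where ∂_λ denotes the partial derivative with respect to λ and the integral of a matrix-valued function is taken entrywise. -/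

import Mathlib

open Matrix Set Metric

lemma pcont1 (f : ℝ × ℝ → ℝ) (hf : ContDiff ℝ 1 f) (g : ℝ → ℝ → ℝ)
    (hg : ∀ x y, HasDerivAt (fun m => f (m, y)) (g x y) x) :
    Continuous fun p : ℝ × ℝ => g p.1 p.2 := by
  have h : ∀ x y : ℝ, g x y = fderiv ℝ f (x, y) (1, 0) := by
    intro x y
    have h1 : HasDerivAt (fun m : ℝ => f (m, y)) (fderiv ℝ f (x, y) (1, 0)) x :=
      (hf.differentiable one_ne_zero (x, y)).hasFDerivAt.comp_hasDerivAt x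
        ((hasDerivAt_id x).prodMk (hasDerivAt_const x y))
    exact (hg x y).unique h1
  have h2 : (fun p : ℝ × ℝ => g p.1 p.2) = fun p => fderiv ℝ f p (1, 0) := by
    funext p; rw [h]
  rw [h2]
  exact (hf.continuous_fderiv one_ne_zero).clm_apply continuous_const

lemma pcont2 (f : ℝ × ℝ → ℝ) (hf : ContDiff ℝ 1 f) (g : ℝ → ℝ → ℝ)
    (hg : ∀ x y, HasDerivAt (fun s => f (x, s)) (g x y) y) :
    Continuous fun p : ℝ × ℝ => g p.1 p.2 := by
  have h : ∀ x y : ℝ, g x y = fderiv ℝ f (x, y) (0, 1) := by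
    intro x y
    have h1 : HasDerivAt (fun s : ℝ => f (x, s)) (fderiv ℝ f (x, y) (0, 1)) y :=
      (hf.differentiable one_ne_zero (x, y)).hasFDerivAt.comp_hasDerivAt y
        ((hasDerivAt_const y x).prodMk (hasDerivAt_id y))
    exact (hg x y).unique h1
  have h2 : (fun p : ℝ × ℝ => g p.1 p.2) = fun p => fderiv ℝ f p (0, 1) := by
    funext p; rw [h]
  rw [h2]
  exact (hf.continuous_fderiv one_ne_zero).clm_apply continuous_const

lemma entry3 {ι : Type*} [Fintype ι] (A B C : Matrix ι ι ℝ) (i j : ι) :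
    (A * B * C) i j = ∑ m, ∑ k, A i k * B k m * C m j := by
  simp [Matrix.mul_apply, Finset.sum_mul]

lemma tripleDeriv {ι : Type*} [Fintype ι] (A B C : ℝ → Matrix ι ι ℝ)
    (A' B' C' : Matrix ι ι ℝ) (x : ℝ)
    (hA : ∀ i j, HasDerivAt (fun s => A s i j) (A' i j) x)
    (hB : ∀ i j, HasDerivAt (fun s => B s i j) (B' i j) x)
    (hC : ∀ i j, HasDerivAt (fun s => C s i j) (C' i j) x) (i j : ι) :
    HasDerivAt (fun s => (A s * B s * C s) i j)
      ((A' * B x * C x + A x * B' * C x + A x * B x * C') i j) x := by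
  have key : HasDerivAt (fun s => ∑ m, ∑ k, A s i k * B s k m * C s m j)
      (∑ m, ∑ k, ((A' i k * B x k m + A x i k * B' k m) * C x m j
        + A x i k * B x k m * C' m j)) x := by
    apply HasDerivAt.fun_sum; intro m _
    apply HasDerivAt.fun_sum; intro k _
    exact ((hA i k).mul (hB k m)).mul (hC m j)
  have hfun : (fun s => (A s * B s * C s) i j)
      = fun s => ∑ m, ∑ k, A s i k * B s k m * C s m j :=
    funext fun s => entry3 _ _ _ _ _
  have hval : (A' * B x * C x + A x * B' * C x + A x * B x * C') i j
      = ∑ m, ∑ k, ((A' i k * B x k m + A x i k * B' k m) * C x m j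
        + A x i k * B x k m * C' m j) := by
    simp only [Matrix.add_apply, entry3, ← Finset.sum_add_distrib]
    refine Finset.sum_congr rfl fun m _ => ?_
    refine Finset.sum_congr rfl fun k _ => ?_
    ring
  rw [hfun, hval]; exact key

lemma tripleCont {X : Type*} [TopologicalSpace X] {ι : Type*} [Fintype ι]
    (A B C : X → Matrix ι ι ℝ)
    (hA : ∀ i j, Continuous fun s => A s i j)
    (hB : ∀ i j, Continuous fun s => B s i j)
    (hC : ∀ i j, Continuous fun s => C s i j) (i j : ι) :
    Continuous fun s => (A s * B s * C s) i j := by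
  have hfun : (fun s => (A s * B s * C s) i j)
      = fun s => ∑ m, ∑ k, A s i k * B s k m * C s m j :=
    funext fun s => entry3 _ _ _ _ _
  rw [hfun]
  exact continuous_finset_sum _ fun m _ =>
    continuous_finset_sum _ fun k _ => ((hA i k).mul (hB k m)).mul (hC m j)

/-- Let `S` be a `C¹` two-parameter family of symmetric matrices and `Ψ` a
`C¹` two-parameter family with `J·Ψ_λ′(t) + S_λ(t)·Ψ_λ(t) = 0` on `[−η,η]` and
`Ψ_λ(−η) = I`. Then for every `λ`,
`∫_{−η}^{η} Ψ_λ(t)ᵀ·(∂_λS)_λ(t)·Ψ_λ(t) dt = −Ψ_λ(η)ᵀ·J·(∂_λΨ)_λ(η)` (entrywise integral). -/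
theorem stmt13 (n : ℕ) (hn : 1 ≤ n) (η : ℝ) (hη : 0 < η)
    (S Ψ Ψt Ψl Sl : ℝ → ℝ → Matrix (Fin n ⊕ Fin n) (Fin n ⊕ Fin n) ℝ)
    (hSC1 : ∀ i j, ContDiff ℝ 1 fun p : ℝ × ℝ => S p.1 p.2 i j)
    (hΨC1 : ∀ i j, ContDiff ℝ 1 fun p : ℝ × ℝ => Ψ p.1 p.2 i j)
    (hSsym : ∀ l t, (S l t)ᵀ = S l t)
    (hΨt : ∀ l t i j, HasDerivAt (fun s => Ψ l s i j) (Ψt l t i j) t)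
    (hODE : ∀ l, ∀ t ∈ Icc (-η) η,
      (Matrix.fromBlocks (0 : Matrix (Fin n) (Fin n) ℝ) (-1) 1 0) * Ψt l t +
        S l t * Ψ l t = 0)
    (hinit : ∀ l, Ψ l (-η) = 1)
    (hΨl : ∀ l t i j, HasDerivAt (fun m => Ψ m t i j) (Ψl l t i j) l)
    (hSl : ∀ l t i j, HasDerivAt (fun m => S m t i j) (Sl l t i j) l) :
    ∀ (l : ℝ) (i j : Fin n ⊕ Fin n),
      ∫ t in (-η)..η,
          ((Ψ l t)ᵀ * Sl l t * Ψ l t : Matrix (Fin n ⊕ Fin n) (Fin n ⊕ Fin n) ℝ) i j =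
        (-((Ψ l η)ᵀ * (Matrix.fromBlocks (0 : Matrix (Fin n) (Fin n) ℝ) (-1) 1 0) * Ψl l η) :
          Matrix (Fin n ⊕ Fin n) (Fin n ⊕ Fin n) ℝ) i j := by
  intro l i j
  set Jm : Matrix (Fin n ⊕ Fin n) (Fin n ⊕ Fin n) ℝ :=
    Matrix.fromBlocks (0 : Matrix (Fin n) (Fin n) ℝ) (-1) 1 0 with hJmdef
  -- basic facts about J
  have hJT : Jmᵀ = -Jm := by
    rw [hJmdef, Matrix.fromBlocks_transpose]
    ext (a | a) (b | b) <;> simp [Matrix.fromBlocks]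
  -- consequences of the ODE
  have hOde1 : ∀ l' t, t ∈ Icc (-η) η → Jm * Ψt l' t = -(S l' t * Ψ l' t) :=
    fun l' t ht => eq_neg_of_add_eq_zero_left (hODE l' t ht)
  have hOde2 : ∀ l' t, t ∈ Icc (-η) η → (Ψt l' t)ᵀ * Jm = (Ψ l' t)ᵀ * S l' t := by
    intro l' t ht
    have h1 := congrArg Matrix.transpose (hOde1 l' t ht)
    rw [Matrix.transpose_mul, hJT, Matrix.transpose_neg, Matrix.transpose_mul, hSsym,
      Matrix.mul_neg] at h1
    exact neg_injective h1
  -- continuity facts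
  have cS : ∀ i' j', Continuous fun p : ℝ × ℝ => S p.1 p.2 i' j' :=
    fun i' j' => (hSC1 i' j').continuous
  have cΨ : ∀ i' j', Continuous fun p : ℝ × ℝ => Ψ p.1 p.2 i' j' :=
    fun i' j' => (hΨC1 i' j').continuous
  have cΨt : ∀ i' j', Continuous fun p : ℝ × ℝ => Ψt p.1 p.2 i' j' :=
    fun i' j' => pcont2 _ (hΨC1 i' j') _ (fun x y => hΨt x y i' j')
  have cΨl : ∀ i' j', Continuous fun p : ℝ × ℝ => Ψl p.1 p.2 i' j' :=
    fun i' j' => pcont1 _ (hΨC1 i' j') _ (fun x y => hΨl x y i' j')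
  have cSl : ∀ i' j', Continuous fun p : ℝ × ℝ => Sl p.1 p.2 i' j' :=
    fun i' j' => pcont1 _ (hSC1 i' j') _ (fun x y => hSl x y i' j')
  have cslice : ∀ (M : ℝ → ℝ → Matrix (Fin n ⊕ Fin n) (Fin n ⊕ Fin n) ℝ),
      (∀ i' j', Continuous fun p : ℝ × ℝ => M p.1 p.2 i' j') →
      ∀ (lam : ℝ) i' j', Continuous fun t => M lam t i' j' := by
    intro M hM lam i' j'
    exact (hM i' j').comp (continuous_const.prodMk continuous_id)
  -- Step 1 : FTC in t
  have step1 : ∀ lam : ℝ,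
      (∫ t in (-η)..η, ((Ψ l t)ᵀ * (S l t - S lam t) * Ψ lam t) i j)
        = ((Ψ l η)ᵀ * Jm * Ψ lam η) i j - Jm i j := by
    intro lam
    have hderiv : ∀ t, HasDerivAt (fun s => ((Ψ l s)ᵀ * Jm * Ψ lam s) i j)
        ((((Ψt l t)ᵀ * Jm * Ψ lam t + (Ψ l t)ᵀ * 0 * Ψ lam t
          + (Ψ l t)ᵀ * Jm * Ψt lam t : Matrix (Fin n ⊕ Fin n) (Fin n ⊕ Fin n) ℝ)) i j) t := by
      intro t
      exact tripleDeriv (fun s => (Ψ l s)ᵀ) (fun _ => Jm) (fun s => Ψ lam s)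
        ((Ψt l t)ᵀ) 0 (Ψt lam t) t
        (fun i' j' => hΨt l t j' i')
        (fun i' j' => hasDerivAt_const t (Jm i' j'))
        (fun i' j' => hΨt lam t i' j') i j
    have hcont : Continuous fun t => ((((Ψt l t)ᵀ * Jm * Ψ lam t + (Ψ l t)ᵀ * 0 * Ψ lam t
        + (Ψ l t)ᵀ * Jm * Ψt lam t : Matrix (Fin n ⊕ Fin n) (Fin n ⊕ Fin n) ℝ)) i j) := by
      have c1 := tripleCont (fun t => (Ψt l t)ᵀ) (fun _ => Jm) (fun t => Ψ lam t)
        (fun i' j' => cslice _ cΨt l j' i') (fun i' j' => continuous_const)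
        (fun i' j' => cslice _ cΨ lam i' j') i j
      have c2 := tripleCont (fun t => (Ψ l t)ᵀ) (fun _ => (0 : Matrix _ _ ℝ)) (fun t => Ψ lam t)
        (fun i' j' => cslice _ cΨ l j' i') (fun i' j' => continuous_const)
        (fun i' j' => cslice _ cΨ lam i' j') i j
      have c3 := tripleCont (fun t => (Ψ l t)ᵀ) (fun _ => Jm) (fun t => Ψt lam t)
        (fun i' j' => cslice _ cΨ l j' i') (fun i' j' => continuous_const)
        (fun i' j' => cslice _ cΨt lam i' j') i j
      simpa [Matrix.add_apply] using (c1.fun_add c2).fun_add c3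
    have hftc := intervalIntegral.integral_eq_sub_of_hasDerivAt
      (f := fun s => ((Ψ l s)ᵀ * Jm * Ψ lam s) i j) (a := -η) (b := η) (fun t _ => hderiv t)
      (hcont.intervalIntegrable _ _)
    have hcongr : EqOn
        (fun t => ((((Ψt l t)ᵀ * Jm * Ψ lam t + (Ψ l t)ᵀ * 0 * Ψ lam t
          + (Ψ l t)ᵀ * Jm * Ψt lam t : Matrix (Fin n ⊕ Fin n) (Fin n ⊕ Fin n) ℝ)) i j))
        (fun t => ((Ψ l t)ᵀ * (S l t - S lam t) * Ψ lam t) i j) (uIcc (-η) η) := by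
      intro t ht
      have ht' : t ∈ Icc (-η) η := by
        rwa [uIcc_of_le (by linarith)] at ht
      have hmat : (Ψt l t)ᵀ * Jm * Ψ lam t + (Ψ l t)ᵀ * 0 * Ψ lam t
          + (Ψ l t)ᵀ * Jm * Ψt lam t = (Ψ l t)ᵀ * (S l t - S lam t) * Ψ lam t := by
        rw [hOde2 l t ht', Matrix.mul_assoc ((Ψ l t)ᵀ) Jm (Ψt lam t), hOde1 lam t ht']
        noncomm_ring
      simp only [hmat]
    rw [← intervalIntegral.integral_congr hcongr, hftc]
    simp [hinit]
  -- Step 2 : derivative of the right-hand side of step1 in λ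
  have hG : HasDerivAt (fun lam => ((Ψ l η)ᵀ * Jm * Ψ lam η) i j - Jm i j)
      (((Ψ l η)ᵀ * Jm * Ψl l η) i j) l := by
    have h0 := tripleDeriv (fun _ => (Ψ l η)ᵀ) (fun _ => Jm) (fun lam => Ψ lam η)
      0 0 (Ψl l η) l
      (fun i' j' => hasDerivAt_const l ((Ψ l η)ᵀ i' j'))
      (fun i' j' => hasDerivAt_const l (Jm i' j'))
      (fun i' j' => hΨl l η i' j') i j
    simpa using (h0.sub_const (Jm i j))
  -- Step 3 : differentiation under the integral sign
  set F : ℝ → ℝ → ℝ := fun lam t => ((Ψ l t)ᵀ * (S l t - S lam t) * Ψ lam t) i j with hF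
  set F' : ℝ → ℝ → ℝ := fun lam t =>
    ((Ψ l t)ᵀ * (-(Sl lam t)) * Ψ lam t + (Ψ l t)ᵀ * (S l t - S lam t) * Ψl lam t) i j with hF'
  have hFd : ∀ (t x : ℝ), HasDerivAt (fun lam => F lam t) (F' x t) x := by
    intro t x
    have h0 := tripleDeriv (fun _ => (Ψ l t)ᵀ) (fun lam => S l t - S lam t)
      (fun lam => Ψ lam t) 0 (-(Sl x t)) (Ψl x t) x
      (fun i' j' => hasDerivAt_const x ((Ψ l t)ᵀ i' j'))
      (fun i' j' => by
        simpa using (hasDerivAt_const x (S l t i' j')).fun_sub (hSl x t i' j'))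
      (fun i' j' => hΨl x t i' j') i j
    simpa [hF, hF', Matrix.add_apply] using h0
  have hFcont : Continuous fun p : ℝ × ℝ => F p.1 p.2 := by
    have := tripleCont (fun p : ℝ × ℝ => (Ψ l p.2)ᵀ)
      (fun p : ℝ × ℝ => S l p.2 - S p.1 p.2) (fun p : ℝ × ℝ => Ψ p.1 p.2)
      (fun i' j' => ((cΨ j' i').comp (continuous_const.prodMk continuous_snd)))
      (fun i' j' => by
        simpa [Matrix.sub_apply] using
          (((cS i' j').comp (continuous_const.prodMk continuous_snd)).fun_sub (cS i' j')))
      (fun i' j' => cΨ i' j') i j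
    exact this
  have hF'cont : Continuous fun p : ℝ × ℝ => F' p.1 p.2 := by
    have c1 := tripleCont (fun p : ℝ × ℝ => (Ψ l p.2)ᵀ)
      (fun p : ℝ × ℝ => -(Sl p.1 p.2)) (fun p : ℝ × ℝ => Ψ p.1 p.2)
      (fun i' j' => ((cΨ j' i').comp (continuous_const.prodMk continuous_snd)))
      (fun i' j' => by simpa [Matrix.neg_apply] using (cSl i' j').fun_neg)
      (fun i' j' => cΨ i' j') i j
    have c2 := tripleCont (fun p : ℝ × ℝ => (Ψ l p.2)ᵀ)
      (fun p : ℝ × ℝ => S l p.2 - S p.1 p.2) (fun p : ℝ × ℝ => Ψl p.1 p.2)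
      (fun i' j' => ((cΨ j' i').comp (continuous_const.prodMk continuous_snd)))
      (fun i' j' => by
        simpa [Matrix.sub_apply] using
          (((cS i' j').comp (continuous_const.prodMk continuous_snd)).fun_sub (cS i' j')))
      (fun i' j' => cΨl i' j') i j
    simpa [hF', Matrix.add_apply] using c1.fun_add c2
  -- bound on F' on a compact set
  obtain ⟨Cb, hCb⟩ := (isCompact_closedBall l 1 |>.prod isCompact_Icc).exists_bound_of_continuousOn
    (s := closedBall l 1 ×ˢ Icc (-η) η) hF'cont.continuousOn
  have hsubset : uIoc (-η) η ⊆ Icc (-η) η := by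
    rw [uIoc_of_le (by linarith)]
    exact Ioc_subset_Icc_self
  have leib := (intervalIntegral.hasDerivAt_integral_of_dominated_loc_of_deriv_le
    (F := F) (F' := F') (x₀ := l) (a := -η) (b := η) (μ := MeasureTheory.volume)
    (bound := fun _ => Cb) (ball_mem_nhds l one_pos)
    (Filter.Eventually.of_forall fun x =>
      ((hFcont.comp (continuous_const.prodMk continuous_id)).aestronglyMeasurable))
    (((hFcont.comp (continuous_const.prodMk continuous_id))).intervalIntegrable _ _)
    ((hF'cont.comp (continuous_const.prodMk continuous_id)).aestronglyMeasurable)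
    (Filter.Eventually.of_forall fun t ht x hx => hCb (x, t)
      ⟨ball_subset_closedBall hx, hsubset ht⟩)
    intervalIntegrable_const
    (Filter.Eventually.of_forall fun t ht x hx => hFd t x)).2
  -- identify the function being differentiated
  have hfun : (fun x => ∫ t in (-η)..η, F x t)
      = fun lam => ((Ψ l η)ᵀ * Jm * Ψ lam η) i j - Jm i j := funext step1
  rw [hfun] at leib
  have huniq : (∫ t in (-η)..η, F' l t) = ((Ψ l η)ᵀ * Jm * Ψl l η) i j := leib.unique hG
  have hFl : ∀ t, F' l t = -(((Ψ l t)ᵀ * Sl l t * Ψ l t) i j) := by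
    intro t
    simp [hF', Matrix.mul_neg, Matrix.neg_mul, Matrix.neg_apply]
  rw [intervalIntegral.integral_congr (g := fun t => -(((Ψ l t)ᵀ * Sl l t * Ψ l t) i j))
    (fun t _ => hFl t), intervalIntegral.integral_neg] at huniq
  have : (∫ t in (-η)..η, ((Ψ l t)ᵀ * Sl l t * Ψ l t) i j)
      = -(((Ψ l η)ᵀ * Jm * Ψl l η) i j) := by linarith [huniq]
  rw [this, hJmdef]
  simp [Matrix.neg_apply]
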